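/- Let f : A → B be a faithfully flat homomorphism of commutative rings. Then the augmented Amitsur complex 0 → A → B → B ⊗_A B → B ⊗_A B ⊗_A B → ⋯ is exact, where the differentials are alternating sums of the maps inserting a 1 into each tensor slot. -/

import Mathlib

open TensorProduct

universe u

variable (A B : Type u) [CommRing A] [CommRing B] [Algebra A B]

/-- `AmitsurPow A B n` is the `n`-fold tensor power `B ⊗[A] ⋯ ⊗[A] B`, with
`AmitsurPow A B 0 = A`. -/
noncomputable def AmitsurPow (n : ℕ) : ModuleCat.{u} A :=
  Nat.rec (ModuleCat.of A A) (fun _ Tn => ModuleCat.of A (Tn ⊗[A] B)) n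

/-- The `i`-th coface (unit-insertion) map `B^{⊗ n} → B^{⊗ (n+1)}`, inserting a `1`
into the `i`-th tensor slot. -/
noncomputable def amitsurIns :
    ∀ n : ℕ, Fin (n + 1) → ((AmitsurPow A B n) →ₗ[A] (AmitsurPow A B (n + 1)))
  | 0, _ => (TensorProduct.mk A (AmitsurPow A B 0) B).flip 1
  | n + 1, i =>
    Fin.lastCases
      ((TensorProduct.mk A (AmitsurPow A B (n + 1)) B).flip 1)
      (fun j => TensorProduct.map (amitsurIns n j) (LinearMap.id (R := A) (M := B)))
      i

/-- The Amitsur differential `B^{⊗ n} → B^{⊗ (n+1)}`, the alternating sum of the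
unit-insertion maps.  In degree `0` it is the structure map `A → B`. -/
noncomputable def amitsurD (n : ℕ) : (AmitsurPow A B n) →ₗ[A] (AmitsurPow A B (n + 1)) :=
  ∑ i : Fin (n + 1), ((-1 : ℤ) ^ (i : ℕ)) • amitsurIns A B n i

/-- Right unit-insertion `x ↦ x ⊗ 1`. -/
noncomputable def amitsurE (n : ℕ) : (AmitsurPow A B n) →ₗ[A] (AmitsurPow A B (n + 1)) :=
  (TensorProduct.mk A (AmitsurPow A B n) B).flip 1

lemma amitsurE_apply (n : ℕ) (x : AmitsurPow A B n) :
    amitsurE A B n x = x ⊗ₜ[A] (1 : B) := rfl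

/-- `rTensor` with the identity of `B`, viewed between Amitsur powers. -/
noncomputable def amitsurR (n m : ℕ) (g : (AmitsurPow A B n) →ₗ[A] (AmitsurPow A B m)) :
    (AmitsurPow A B (n + 1)) →ₗ[A] (AmitsurPow A B (m + 1)) :=
  LinearMap.rTensor B g

lemma amitsurR_tmul (n m : ℕ) (g : (AmitsurPow A B n) →ₗ[A] (AmitsurPow A B m))
    (t : AmitsurPow A B n) (c : B) :
    amitsurR A B n m g ((t ⊗ₜ[A] c : (AmitsurPow A B n) ⊗[A] B) : AmitsurPow A B (n + 1))
      = ((g t ⊗ₜ[A] c : (AmitsurPow A B m) ⊗[A] B) : AmitsurPow A B (m + 1)) := rfl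

lemma amitsurD_succ (n : ℕ) :
    amitsurD A B (n + 1)
      = amitsurR A B n (n + 1) (amitsurD A B n) + ((-1 : ℤ) ^ (n + 1)) • amitsurE A B (n + 1) := by
  rw [show amitsurD A B (n + 1)
      = ∑ i : Fin (n + 2), ((-1 : ℤ) ^ (i : ℕ)) • amitsurIns A B (n + 1) i from rfl,
    Fin.sum_univ_castSucc]
  congr 1
  · rw [show amitsurD A B n
      = ∑ i : Fin (n + 1), ((-1 : ℤ) ^ (i : ℕ)) • amitsurIns A B n i from rfl]
    rw [show amitsurR A B n (n + 1) = LinearMap.rTensorHom (R := A) B from rfl, map_sum]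
    refine Finset.sum_congr rfl fun i _ => ?_
    rw [map_zsmul]
    simp only [Fin.coe_castSucc]
    congr 1
    show amitsurIns A B (n + 1) i.castSucc = LinearMap.rTensor B (amitsurIns A B n i)
    exact Fin.lastCases_castSucc (motive := fun _ =>
      (AmitsurPow A B (n + 1) →ₗ[A] AmitsurPow A B (n + 1 + 1))) i
  · simp only [Fin.val_last]
    congr 1
    show amitsurIns A B (n + 1) (Fin.last (n + 1)) = amitsurE A B (n + 1)
    exact Fin.lastCases_last (motive := fun _ =>
      (AmitsurPow A B (n + 1) →ₗ[A] AmitsurPow A B (n + 1 + 1)))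

lemma amitsurD_zero : amitsurD A B 0 = amitsurE A B 0 := by
  show (∑ i : Fin 1, ((-1 : ℤ) ^ (i : ℕ)) • amitsurIns A B 0 i) = _
  simp only [Fin.sum_univ_one, Fin.val_zero, pow_zero, one_smul]
  rfl

lemma amitsurR_comp_amitsurE (n m : ℕ) (g : (AmitsurPow A B n) →ₗ[A] (AmitsurPow A B m)) :
    (amitsurR A B n m g) ∘ₗ amitsurE A B n = amitsurE A B m ∘ₗ g := by
  ext x
  rfl

lemma amitsurR_comp (n m k : ℕ) (g : (AmitsurPow A B n) →ₗ[A] (AmitsurPow A B m))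
    (h : (AmitsurPow A B m) →ₗ[A] (AmitsurPow A B k)) :
    (amitsurR A B m k h) ∘ₗ (amitsurR A B n m g) = amitsurR A B n k (h ∘ₗ g) := by
  show LinearMap.rTensor B h ∘ₗ LinearMap.rTensor B g = LinearMap.rTensor B (h ∘ₗ g)
  rw [LinearMap.rTensor_comp]

lemma amitsurR_zero (n m : ℕ) : amitsurR A B n m 0 = 0 := by
  show LinearMap.rTensor B (0 : (AmitsurPow A B n) →ₗ[A] (AmitsurPow A B m)) = 0
  exact LinearMap.rTensor_zero B

lemma amitsurD_comp_amitsurD (n : ℕ) :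
    (amitsurD A B (n + 1)) ∘ₗ (amitsurD A B n) = 0 := by
  induction n with
  | zero =>
    rw [amitsurD_succ, amitsurD_zero, LinearMap.add_comp, amitsurR_comp_amitsurE,
      LinearMap.smul_comp, pow_one, neg_smul, one_smul]
    exact add_neg_cancel _
  | succ n ih =>
    rw [amitsurD_succ A B (n + 1), LinearMap.add_comp, LinearMap.smul_comp]
    nth_rewrite 2 [amitsurD_succ A B n]
    rw [LinearMap.comp_add, LinearMap.comp_smul, amitsurR_comp, ih, amitsurR_zero,
      amitsurR_comp_amitsurE A B (n + 1) (n + 2) (amitsurD A B (n + 1))]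
    have h2 : ((-1 : ℤ) ^ (n + 1 + 1)) = -((-1 : ℤ) ^ (n + 1)) := by ring
    rw [h2, neg_smul]
    abel

/-- The contracting homotopy of the Amitsur complex tensored with `B`:
multiply the last tensor factor into the outer `B`. -/
noncomputable def amitsurS (n : ℕ) :
    (B ⊗[A] (AmitsurPow A B (n + 1))) →ₗ[A] (B ⊗[A] (AmitsurPow A B n)) :=
  (LinearMap.rTensor (AmitsurPow A B n) (LinearMap.mul' A B)) ∘ₗ
    (TensorProduct.assoc A B B (AmitsurPow A B n)).symm.toLinearMap ∘ₗ
    (LinearMap.lTensor B (TensorProduct.comm A (AmitsurPow A B n) B).toLinearMap)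

lemma amitsurS_apply (n : ℕ) (b c : B) (y : AmitsurPow A B n) :
    amitsurS A B n (b ⊗ₜ[A] ((y ⊗ₜ[A] c : (AmitsurPow A B n) ⊗[A] B) : AmitsurPow A B (n + 1)))
      = (b * c) ⊗ₜ[A] y := by
  rfl

lemma amitsur_homotopy_zero :
    (amitsurS A B 0) ∘ₗ (LinearMap.lTensor B (amitsurD A B 0)) = LinearMap.id := by
  apply TensorProduct.ext'
  intro b a
  rw [LinearMap.comp_apply, LinearMap.lTensor_tmul, amitsurD_zero, amitsurE_apply,
    amitsurS_apply, mul_one, LinearMap.id_apply]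

lemma amitsur_homotopy (n : ℕ) :
    (amitsurS A B (n + 1)) ∘ₗ (LinearMap.lTensor B (amitsurD A B (n + 1)))
      - (LinearMap.lTensor B (amitsurD A B n)) ∘ₗ (amitsurS A B n)
      = ((-1 : ℤ) ^ (n + 1)) • LinearMap.id := by
  apply TensorProduct.ext'
  intro b x
  refine TensorProduct.induction_on
    (motive := fun x : (AmitsurPow A B n) ⊗[A] B =>
      ((amitsurS A B (n + 1)) ∘ₗ (LinearMap.lTensor B (amitsurD A B (n + 1)))
        - (LinearMap.lTensor B (amitsurD A B n)) ∘ₗ (amitsurS A B n)) (b ⊗ₜ[A] x)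
      = (((-1 : ℤ) ^ (n + 1)) • (LinearMap.id
          (R := A) (M := B ⊗[A] (AmitsurPow A B (n + 1))))) (b ⊗ₜ[A] x))
    x ?_ ?_ ?_
  · erw [TensorProduct.tmul_zero]
    simp
  · intro t c
    simp only [LinearMap.sub_apply, LinearMap.comp_apply, LinearMap.lTensor_tmul,
      LinearMap.smul_apply, LinearMap.id_apply]
    rw [amitsurD_succ]
    erw [LinearMap.lTensor_tmul, LinearMap.add_apply, LinearMap.smul_apply, amitsurR_tmul,
      amitsurE_apply]
    erw [tmul_add, tmul_smul, map_add, map_zsmul]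
    have e1 := amitsurS_apply A B (n+1) b (1:B) (t ⊗ₜ[A] c)
    have e2 := amitsurS_apply A B (n+1) b c (amitsurD A B n t)
    erw [e1, e2, mul_one]
    abel
  · intro x y hx hy
    erw [TensorProduct.tmul_add, map_add, hx, hy]
    exact (map_add _ _ _).symm

/-- If `A → B` is faithfully flat, then the augmented Amitsur complex
`0 → A → B → B ⊗[A] B → B ⊗[A] B ⊗[A] B → ⋯`, with differentials the alternating
sums of the unit-insertion maps, is exact. -/
theorem amitsur_complex_exact_of_faithfullyFlat
    [Module.FaithfullyFlat A B] :
    Function.Injective (amitsurD A B 0) ∧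
    ∀ n : ℕ, LinearMap.ker (amitsurD A B (n + 1)) = LinearMap.range (amitsurD A B n) := by
  constructor
  · -- injectivity of the augmentation
    have hinj : Function.Injective ((amitsurD A B 0).lTensor B) := by
      have h0 := amitsur_homotopy_zero A B
      intro x y hxy
      have : amitsurS A B 0 ((amitsurD A B 0).lTensor B x)
          = amitsurS A B 0 ((amitsurD A B 0).lTensor B y) := by rw [hxy]
      rwa [← LinearMap.comp_apply, ← LinearMap.comp_apply, h0, LinearMap.id_apply,
        LinearMap.id_apply] at this
    have hex : Function.Exact
        ((0 : PUnit.{u + 1} →ₗ[A] AmitsurPow A B 0).lTensor B)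
        ((amitsurD A B 0).lTensor B) := by
      intro y
      constructor
      · intro hy
        have : y = 0 := hinj (by simpa using hy)
        exact ⟨0, by simp [this]⟩
      · rintro ⟨z, rfl⟩
        simp
    have := Module.FaithfullyFlat.lTensor_reflects_exact A B
      (0 : PUnit.{u + 1} →ₗ[A] AmitsurPow A B 0) (amitsurD A B 0) hex
    intro x y hxy
    have hsub : amitsurD A B 0 (x - y) = 0 := by rw [map_sub, hxy, sub_self]
    obtain ⟨z, hz⟩ := (this (x - y)).1 hsub
    simp only [LinearMap.zero_apply] at hz
    exact sub_eq_zero.1 hz.symm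
  · intro n
    have hcx := amitsurD_comp_amitsurD A B n
    have hex : Function.Exact ((amitsurD A B n).lTensor B)
        ((amitsurD A B (n + 1)).lTensor B) := by
      intro y
      constructor
      · intro hy
        have hh := congrArg (fun f => f y) (amitsur_homotopy A B n)
        simp only [LinearMap.sub_apply, LinearMap.comp_apply, LinearMap.smul_apply,
          LinearMap.id_apply, hy, map_zero, zero_sub] at hh
        refine ⟨((-1 : ℤ) ^ (n + 1)) • (-(amitsurS A B n y)), ?_⟩
        rw [map_zsmul, map_neg, hh, smul_smul, ← pow_add]
        have : ((-1 : ℤ) ^ (n + 1 + (n + 1))) = 1 := Even.neg_one_pow ⟨n + 1, rfl⟩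
        rw [this, one_smul]
      · rintro ⟨z, rfl⟩
        rw [← LinearMap.comp_apply, ← LinearMap.lTensor_comp, hcx, LinearMap.lTensor_zero,
          LinearMap.zero_apply]
    have := Module.FaithfullyFlat.lTensor_reflects_exact A B
      (amitsurD A B n) (amitsurD A B (n + 1)) hex
    exact LinearMap.exact_iff.1 this
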